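/- Every Hilbert-Schmidt bilinear operator T : H₁ × H₂ → K is compact (the image of the product of closed unit balls is precompact in K). -/

import Mathlib

open scoped InnerProductSpace
open Metric Set

set_option maxHeartbeats 1000000 in
theorem stmt_18 {H₁ H₂ K : Type*}
    [NormedAddCommGroup H₁] [InnerProductSpace ℝ H₁] [CompleteSpace H₁]
    [TopologicalSpace.SeparableSpace H₁]
    [NormedAddCommGroup H₂] [InnerProductSpace ℝ H₂] [CompleteSpace H₂]
    [TopologicalSpace.SeparableSpace H₂]
    [NormedAddCommGroup K] [InnerProductSpace ℝ K] [CompleteSpace K]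
    [TopologicalSpace.SeparableSpace K]
    (T : H₁ →L[ℝ] H₂ →L[ℝ] K)
    {ι₁ ι₂ : Type*}
    (u : HilbertBasis ι₁ ℝ H₁) (v : HilbertBasis ι₂ ℝ H₂)
    (hsum : Summable fun p : ι₁ × ι₂ => ‖T (u p.1) (v p.2)‖ ^ 2) :
    IsCompact (closure ((fun p : H₁ × H₂ => T p.1 p.2) ''
      (Metric.closedBall 0 1 ×ˢ Metric.closedBall 0 1))) := by
  classical
  -- Parseval for the two bases
  have hax : ∀ x : H₁, HasSum (fun i => (u.repr x i : ℝ) ^ 2) (‖x‖ ^ 2) := by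
    intro x
    have h := u.hasSum_inner_mul_inner x x
    have heq : ∀ i, ⟪x, u i⟫_ℝ * ⟪u i, x⟫_ℝ = (u.repr x i : ℝ) ^ 2 := by
      intro i
      rw [u.repr_apply_apply, real_inner_comm x (u i)]; ring
    rw [real_inner_self_eq_norm_sq] at h
    simpa only [heq] using h
  have hay : ∀ y : H₂, HasSum (fun j => (v.repr y j : ℝ) ^ 2) (‖y‖ ^ 2) := by
    intro y
    have h := v.hasSum_inner_mul_inner y y
    have heq : ∀ j, ⟪y, v j⟫_ℝ * ⟪v j, y⟫_ℝ = (v.repr y j : ℝ) ^ 2 := by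
      intro j
      rw [v.repr_apply_apply, real_inner_comm y (v j)]; ring
    rw [real_inner_self_eq_norm_sq] at h
    simpa only [heq] using h
  -- summability of the squared coefficient products
  have hsq : ∀ (x : H₁) (y : H₂),
      HasSum (fun p : ι₁ × ι₂ => (u.repr x p.1 : ℝ) ^ 2 * (v.repr y p.2 : ℝ) ^ 2)
        (‖x‖ ^ 2 * ‖y‖ ^ 2) := by
    intro x y
    exact (hax x).mul (hay y)
      ((hax x).summable.mul_of_nonneg (hay y).summable
        (fun i => sq_nonneg _) (fun j => sq_nonneg _))
  -- norm summability of the double series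
  have hnorm : ∀ (x : H₁) (y : H₂),
      Summable (fun p : ι₁ × ι₂ =>
        ‖(u.repr x p.1 * v.repr y p.2) • T (u p.1) (v p.2)‖) := by
    intro x y
    refine Summable.of_nonneg_of_le (fun p => norm_nonneg _) ?_
      (((hsq x y).summable.add hsum).div_const 2)
    intro p
    rw [norm_smul, Real.norm_eq_abs]
    have h2 := two_mul_le_add_sq (|u.repr x p.1 * v.repr y p.2|) ‖T (u p.1) (v p.2)‖
    have h3 : (|u.repr x p.1 * v.repr y p.2|) ^ 2
        = (u.repr x p.1 : ℝ) ^ 2 * (v.repr y p.2 : ℝ) ^ 2 := by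
      rw [sq_abs, mul_pow]
    nlinarith [abs_nonneg (u.repr x p.1 * v.repr y p.2), norm_nonneg (T (u p.1) (v p.2))]
  -- the double series expansion of `T x y`
  have key : ∀ (x : H₁) (y : H₂),
      HasSum (fun p : ι₁ × ι₂ => (u.repr x p.1 * v.repr y p.2) • T (u p.1) (v p.2)) (T x y) := by
    intro x y
    have hF : Summable (fun p : ι₁ × ι₂ =>
        (u.repr x p.1 * v.repr y p.2) • T (u p.1) (v p.2)) :=
      (hnorm x y).of_norm
    have hfib : ∀ i : ι₁, HasSum
        (fun j : ι₂ => (u.repr x i * v.repr y j) • T (u i) (v j))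
        (u.repr x i • T (u i) y) := by
      intro i
      have h2 := (v.hasSum_repr y).mapL (T (u i))
      have h3 := h2.const_smul (u.repr x i : ℝ)
      simpa only [map_smul, smul_smul] using h3
    have houter : HasSum (fun i : ι₁ => u.repr x i • T (u i) y) (T x y) := by
      have h4 := (u.hasSum_repr x).mapL (T.flip y)
      simpa only [map_smul, ContinuousLinearMap.flip_apply] using h4
    have h5 := hF.hasSum.prod_fiberwise hfib
    exact (houter.unique h5) ▸ hF.hasSum
  -- total boundedness of the image
  have TB : TotallyBounded ((fun p : H₁ × H₂ => T p.1 p.2) ''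
      (Metric.closedBall 0 1 ×ˢ Metric.closedBall 0 1)) := by
    rw [Metric.totallyBounded_iff]
    intro ε hε
    have hε3 : (0 : ℝ) < ε / 3 := by linarith
    -- choose a finite set of indices capturing almost all of the Hilbert-Schmidt norm
    obtain ⟨s, hs⟩ : ∃ s : Finset (ι₁ × ι₂),
        (∑' p : {p : ι₁ × ι₂ // p ∉ s}, ‖T (u (p : ι₁ × ι₂).1) (v (p : ι₁ × ι₂).2)‖ ^ 2)
          < (ε / 3) ^ 2 := by
      have htend := tendsto_tsum_compl_atTop_zero
        (fun p : ι₁ × ι₂ => ‖T (u p.1) (v p.2)‖ ^ 2)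
      exact (htend.eventually (gt_mem_nhds (by positivity : (0:ℝ) < (ε / 3) ^ 2))).exists
    -- the compact finite-rank "model" set
    set φ : ((ι₁ × ι₂) → ℝ) → K := fun c => ∑ p ∈ s, c p • T (u p.1) (v p.2) with hφdef
    have hφcont : Continuous φ := by
      apply continuous_finset_sum
      intro p _
      exact (continuous_apply p).smul continuous_const
    have hC : IsCompact (φ '' (Set.pi Set.univ fun _ : ι₁ × ι₂ => Set.Icc (-1 : ℝ) 1)) :=
      (isCompact_univ_pi fun _ => isCompact_Icc).image hφcont
    obtain ⟨t, htf, htC⟩ := Metric.totallyBounded_iff.1 hC.totallyBounded (ε / 3) hε3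
    refine ⟨t, htf, ?_⟩
    rintro z ⟨⟨x, y⟩, ⟨hx, hy⟩, rfl⟩
    rw [Metric.mem_closedBall, dist_zero_right] at hx hy
    replace hx : ‖x‖ ≤ 1 := hx
    replace hy : ‖y‖ ≤ 1 := hy
    -- coefficient bounds
    have habs : ∀ i, |(u.repr x i : ℝ)| ≤ 1 := by
      intro i
      have h1 : (u.repr x i : ℝ) ^ 2 ≤ ‖x‖ ^ 2 :=
        le_hasSum (hax x) i (fun j _ => sq_nonneg _)
      have h2 := Real.sqrt_le_sqrt h1
      rw [Real.sqrt_sq_eq_abs, Real.sqrt_sq (norm_nonneg x)] at h2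
      exact h2.trans hx
    have hbbs : ∀ j, |(v.repr y j : ℝ)| ≤ 1 := by
      intro j
      have h1 : (v.repr y j : ℝ) ^ 2 ≤ ‖y‖ ^ 2 :=
        le_hasSum (hay y) j (fun i _ => sq_nonneg _)
      have h2 := Real.sqrt_le_sqrt h1
      rw [Real.sqrt_sq_eq_abs, Real.sqrt_sq (norm_nonneg y)] at h2
      exact h2.trans hy
    set c : (ι₁ × ι₂) → ℝ := fun p => u.repr x p.1 * v.repr y p.2 with hcdef
    have hcmem : c ∈ Set.pi Set.univ fun _ : ι₁ × ι₂ => Set.Icc (-1 : ℝ) 1 := by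
      intro p _
      rw [Set.mem_Icc, ← abs_le]
      calc |c p| = |(u.repr x p.1 : ℝ)| * |(v.repr y p.2 : ℝ)| := abs_mul _ _
        _ ≤ 1 := mul_le_one₀ (habs p.1) (abs_nonneg _) (hbbs p.2)
    -- tail estimate: ‖T x y - φ c‖ ≤ ε / 3
    have hdiff : T x y - φ c = ∑' p : {p : ι₁ × ι₂ // p ∉ s},
        (c (p : ι₁ × ι₂)) • T (u (p : ι₁ × ι₂).1) (v (p : ι₁ × ι₂).2) := by
      have h6 := Summable.sum_add_tsum_compl (s := s) (key x y).summable
      rw [(key x y).tsum_eq] at h6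
      rw [hφdef]
      exact (eq_sub_of_add_eq' h6).symm
    have hsub_norm : Summable (fun p : {p : ι₁ × ι₂ // p ∉ s} =>
        ‖(c (p : ι₁ × ι₂)) • T (u (p : ι₁ × ι₂).1) (v (p : ι₁ × ι₂).2)‖) :=
      (hnorm x y).subtype _
    have htail : ‖T x y - φ c‖ ≤ ε / 3 := by
      rw [hdiff]
      refine le_trans (norm_tsum_le_tsum_norm hsub_norm) ?_
      refine hsub_norm.tsum_le_of_sum_le ?_
      intro w
      -- Cauchy-Schwarz on the finset `w`
      have hCS := Finset.sum_mul_sq_le_sq_mul_sq w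
        (fun q : {p : ι₁ × ι₂ // p ∉ s} => |c (q : ι₁ × ι₂)|)
        (fun q : {p : ι₁ × ι₂ // p ∉ s} => ‖T (u (q : ι₁ × ι₂).1) (v (q : ι₁ × ι₂).2)‖)
      have hA : (∑ q ∈ w, |c (q : ι₁ × ι₂)| ^ 2) ≤ 1 := by
        have h1 : (∑ q ∈ w, |c (q : ι₁ × ι₂)| ^ 2)
            ≤ ∑' q : {p : ι₁ × ι₂ // p ∉ s}, |c (q : ι₁ × ι₂)| ^ 2 := by
          refine Summable.sum_le_tsum w (fun q _ => sq_nonneg _) ?_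
          have := ((hsq x y).summable.subtype {p : ι₁ × ι₂ | p ∉ s})
          refine this.congr fun q => ?_
          simp [hcdef, mul_pow, sq_abs, Function.comp]
        have h2 : (∑' q : {p : ι₁ × ι₂ // p ∉ s}, |c (q : ι₁ × ι₂)| ^ 2)
            ≤ ∑' p : ι₁ × ι₂, (u.repr x p.1 : ℝ) ^ 2 * (v.repr y p.2 : ℝ) ^ 2 := by
          have h3 : (fun q : {p : ι₁ × ι₂ // p ∉ s} => |c (q : ι₁ × ι₂)| ^ 2)
              = fun q : {p : ι₁ × ι₂ // p ∉ s} =>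
                (u.repr x (q : ι₁ × ι₂).1 : ℝ) ^ 2 * (v.repr y (q : ι₁ × ι₂).2 : ℝ) ^ 2 := by
            funext q; simp [hcdef, mul_pow, sq_abs]
          rw [h3]
          exact Summable.tsum_subtype_le
            (fun p : ι₁ × ι₂ => (u.repr x p.1 : ℝ) ^ 2 * (v.repr y p.2 : ℝ) ^ 2) _
            (fun p => mul_nonneg (sq_nonneg _) (sq_nonneg _)) (hsq x y).summable
        have h4 : (∑' p : ι₁ × ι₂, (u.repr x p.1 : ℝ) ^ 2 * (v.repr y p.2 : ℝ) ^ 2)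
            = ‖x‖ ^ 2 * ‖y‖ ^ 2 := (hsq x y).tsum_eq
        have e1 : ‖x‖ ^ 2 ≤ 1 := by nlinarith [norm_nonneg x]
        have e2 : ‖y‖ ^ 2 ≤ 1 := by nlinarith [norm_nonneg y]
        have h5 : ‖x‖ ^ 2 * ‖y‖ ^ 2 ≤ 1 := mul_le_one₀ e1 (sq_nonneg _) e2
        linarith
      have hB : (∑ q ∈ w, ‖T (u (q : ι₁ × ι₂).1) (v (q : ι₁ × ι₂).2)‖ ^ 2) ≤ (ε / 3) ^ 2 := by
        have h1 : (∑ q ∈ w, ‖T (u (q : ι₁ × ι₂).1) (v (q : ι₁ × ι₂).2)‖ ^ 2)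
            ≤ ∑' p : {p : ι₁ × ι₂ // p ∉ s}, ‖T (u (p : ι₁ × ι₂).1) (v (p : ι₁ × ι₂).2)‖ ^ 2 :=
          Summable.sum_le_tsum w (fun q _ => sq_nonneg _) (hsum.subtype _)
        linarith
      have hL : (∑ q ∈ w, ‖(c (q : ι₁ × ι₂)) • T (u (q : ι₁ × ι₂).1) (v (q : ι₁ × ι₂).2)‖)
          = ∑ q ∈ w, |c (q : ι₁ × ι₂)| * ‖T (u (q : ι₁ × ι₂).1) (v (q : ι₁ × ι₂).2)‖ := by
        refine Finset.sum_congr rfl fun q _ => ?_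
        rw [norm_smul, Real.norm_eq_abs]
      rw [hL]
      have hEnonneg : (0:ℝ) ≤ ε / 3 := hε3.le
      have hsum_nonneg : (0:ℝ) ≤ ∑ q ∈ w, |c (q : ι₁ × ι₂)| *
          ‖T (u (q : ι₁ × ι₂).1) (v (q : ι₁ × ι₂).2)‖ :=
        Finset.sum_nonneg fun q _ => mul_nonneg (abs_nonneg _) (norm_nonneg _)
      nlinarith [hCS, hA, hB, Finset.sum_nonneg (fun q (_ : q ∈ w) =>
        sq_nonneg (‖T (u (q : ι₁ × ι₂).1) (v (q : ι₁ × ι₂).2)‖))]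
    -- assemble
    have hφmem : φ c ∈ φ '' (Set.pi Set.univ fun _ : ι₁ × ι₂ => Set.Icc (-1 : ℝ) 1) :=
      ⟨c, hcmem, rfl⟩
    obtain ⟨w₀, hw₀t, hw₀⟩ : ∃ w₀ ∈ t, φ c ∈ Metric.ball w₀ (ε / 3) := by
      have := htC hφmem
      simpa using this
    refine Set.mem_iUnion₂.2 ⟨w₀, hw₀t, ?_⟩
    rw [Metric.mem_ball]
    calc dist (T x y) w₀ ≤ dist (T x y) (φ c) + dist (φ c) w₀ := dist_triangle _ _ _
      _ ≤ ε / 3 + dist (φ c) w₀ := by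
          rw [dist_eq_norm]; exact add_le_add_left htail _
      _ < ε / 3 + ε / 3 := by
          exact add_lt_add_right (Metric.mem_ball.1 hw₀) _
      _ < ε := by linarith
  exact TB.closure.isCompact_of_isClosed isClosed_closure
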